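/- Let Q ≠ 0, s > 0 and set β := 9sM² − 8Q². (i) If β > 0 then Λ₋ and Λ₊ are real with Λ₋ < Λ₊, Λ₊ > 0, and the sign of Λ₋ coincides with the sign of Q² − sM² (i.e. Λ₋ > 0 iff Q² > sM², Λ₋ = 0 iff Q² = sM², and Λ₋ < 0 iff Q² < sM²). (ii) If β = 0 then Λ₋ = Λ₊ = 1/(4 s² Q²). -/

import Mathlib

noncomputable section

/-- `Λ₋`, defined for `β := 9sM² − 8Q² ≥ 0`. -/
def Λminus (M Q s : ℝ) : ℝ :=
  1 / (32 * s ^ 2 * Q ^ 6) *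
    (8 * Q ^ 4 - (9 * s * M ^ 2 - 8 * Q ^ 2) * (9 * s * M ^ 2 - 8 * Q ^ 2 + 4 * Q ^ 2)
      - 3 * Real.sqrt (s * M ^ 2 * (9 * s * M ^ 2 - 8 * Q ^ 2) ^ 3))

/-- `Λ₊`, defined for `β := 9sM² − 8Q² ≥ 0`. -/
def Λplus (M Q s : ℝ) : ℝ :=
  1 / (32 * s ^ 2 * Q ^ 6) *
    (8 * Q ^ 4 - (9 * s * M ^ 2 - 8 * Q ^ 2) * (9 * s * M ^ 2 - 8 * Q ^ 2 + 4 * Q ^ 2)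
      + 3 * Real.sqrt (s * M ^ 2 * (9 * s * M ^ 2 - 8 * Q ^ 2) ^ 3))

/-- Basic properties of `Λ₋` and `Λ₊` in terms of `β = 9sM² − 8Q²`. -/
theorem Lambda_pm_properties (M Q s : ℝ) (hQ : Q ≠ 0) (hs : 0 < s) :
    ((0 < 9 * s * M ^ 2 - 8 * Q ^ 2) →
      Λminus M Q s < Λplus M Q s ∧ 0 < Λplus M Q s ∧
      (0 < Λminus M Q s ↔ s * M ^ 2 < Q ^ 2) ∧
      (Λminus M Q s = 0 ↔ s * M ^ 2 = Q ^ 2) ∧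
      (Λminus M Q s < 0 ↔ Q ^ 2 < s * M ^ 2)) ∧
    ((9 * s * M ^ 2 - 8 * Q ^ 2 = 0) →
      Λminus M Q s = 1 / (4 * s ^ 2 * Q ^ 2) ∧
      Λplus M Q s = 1 / (4 * s ^ 2 * Q ^ 2)) := by
  have hq : (0:ℝ) < Q ^ 2 := by positivity
  have hc : (0:ℝ) < 1 / (32 * s ^ 2 * Q ^ 6) := by positivity
  have h576 : (0:ℝ) < 576 * Q ^ 6 := by positivity
  constructor
  · intro hβ
    have hM : 0 < s * M ^ 2 := by nlinarith
    have hrad : 0 < s * M ^ 2 * (9 * s * M ^ 2 - 8 * Q ^ 2) ^ 3 := by positivity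
    set S := Real.sqrt (s * M ^ 2 * (9 * s * M ^ 2 - 8 * Q ^ 2) ^ 3) with hSdef
    have hS2 : S ^ 2 = s * M ^ 2 * (9 * s * M ^ 2 - 8 * Q ^ 2) ^ 3 :=
      Real.sq_sqrt hrad.le
    have hSpos : 0 < S := Real.sqrt_pos.mpr hrad
    set A := 8 * Q ^ 4 - (9 * s * M ^ 2 - 8 * Q ^ 2) * (9 * s * M ^ 2 - 8 * Q ^ 2 + 4 * Q ^ 2)
      with hAdef
    have hprod : (A - 3 * S) * (A + 3 * S) = 576 * Q ^ 6 * (Q ^ 2 - s * M ^ 2) := by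
      have : A ^ 2 - 9 * S ^ 2 = 576 * Q ^ 6 * (Q ^ 2 - s * M ^ 2) := by
        rw [hS2, hAdef]; ring
      nlinarith [this]
    have hplus : 0 < A + 3 * S := by
      rcases le_or_gt (s * M ^ 2) (Q ^ 2) with h | h
      · have hβq : 9 * s * M ^ 2 - 8 * Q ^ 2 ≤ Q ^ 2 := by nlinarith
        have hApos : 0 < A := by nlinarith
        linarith
      · by_contra hn
        push_neg at hn
        have hm : A - 3 * S ≤ 0 := by linarith
        have h1 : 0 ≤ (-(A - 3 * S)) * (-(A + 3 * S)) :=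
          mul_nonneg (by linarith) (by linarith)
        have h2 : 576 * Q ^ 6 * (Q ^ 2 - s * M ^ 2) < 0 :=
          mul_neg_of_pos_of_neg h576 (by linarith)
        nlinarith [hprod]
    have hN1 : 0 < A - 3 * S ↔ s * M ^ 2 < Q ^ 2 := by
      constructor
      · intro hN
        by_contra hn
        push_neg at hn
        have h2 : 576 * Q ^ 6 * (Q ^ 2 - s * M ^ 2) ≤ 0 :=
          mul_nonpos_of_nonneg_of_nonpos h576.le (by linarith)
        nlinarith [mul_pos hN hplus, hprod]
      · intro h
        by_contra hn
        push_neg at hn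
        have h1 : (A - 3 * S) * (A + 3 * S) ≤ 0 :=
          mul_nonpos_of_nonpos_of_nonneg hn hplus.le
        have h2 : 0 < 576 * Q ^ 6 * (Q ^ 2 - s * M ^ 2) :=
          mul_pos h576 (by linarith)
        linarith [hprod ▸ h1]
    have hN2 : A - 3 * S = 0 ↔ s * M ^ 2 = Q ^ 2 := by
      constructor
      · intro hN
        have h1 : 576 * Q ^ 6 * (Q ^ 2 - s * M ^ 2) = 0 := by
          rw [← hprod, hN, zero_mul]
        have h2 : Q ^ 2 - s * M ^ 2 = 0 :=
          (mul_eq_zero.mp h1).resolve_left (by positivity)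
        linarith
      · intro h
        have h1 : (A - 3 * S) * (A + 3 * S) = 0 := by
          rw [hprod, h]; ring
        exact (mul_eq_zero.mp h1).resolve_right hplus.ne'
    have hN3 : A - 3 * S < 0 ↔ Q ^ 2 < s * M ^ 2 := by
      constructor
      · intro hN
        by_contra hn
        push_neg at hn
        rcases eq_or_lt_of_le hn with h | h
        · have := hN2.mpr h; linarith
        · have := hN1.mpr h; linarith
      · intro h
        rcases lt_trichotomy (A - 3 * S) 0 with h' | h' | h'
        · exact h'
        · have := hN2.mp h'; linarith
        · have := hN1.mp h'; linarith
    have hLm : Λminus M Q s = 1 / (32 * s ^ 2 * Q ^ 6) * (A - 3 * S) := rfl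
    have hLp : Λplus M Q s = 1 / (32 * s ^ 2 * Q ^ 6) * (A + 3 * S) := rfl
    have hcne : (1 / (32 * s ^ 2 * Q ^ 6) : ℝ) ≠ 0 := hc.ne'
    refine ⟨?_, ?_, ?_, ?_, ?_⟩
    · rw [hLm, hLp]
      exact mul_lt_mul_of_pos_left (by linarith) hc
    · rw [hLp]; exact mul_pos hc hplus
    · rw [hLm, ← hN1]
      constructor
      · intro h
        rcases lt_trichotomy (A - 3 * S) 0 with h' | h' | h'
        · exact absurd h (not_lt.mpr (mul_nonpos_of_nonneg_of_nonpos hc.le h'.le))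
        · rw [h', mul_zero] at h; exact absurd h (lt_irrefl 0)
        · exact h'
      · intro h; exact mul_pos hc h
    · rw [hLm, mul_eq_zero, or_iff_right hcne]
      exact hN2
    · rw [hLm, ← hN3]
      constructor
      · intro h
        by_contra hn
        push_neg at hn
        exact absurd h (not_lt.mpr (mul_nonneg hc.le hn))
      · intro h; exact mul_neg_of_pos_of_neg hc h
  · intro h0
    have hs0 : Real.sqrt (s * M ^ 2 * (9 * s * M ^ 2 - 8 * Q ^ 2) ^ 3) = 0 := by
      rw [h0]; simp
    constructor <;>
    · simp only [Λminus, Λplus, hs0, h0]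
      field_simp
      rw [show s * 0 ^ 3 * M ^ 2 = (0:ℝ) by ring, Real.sqrt_zero]
      ring
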